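/- For every M > 0 and every x ∈ ℝⁿ with 0 < |x| < 2 there exist constants c, t₀ > 0 depending only on M and |x| such that for every radial set K ⊆ ℝⁿ with ρ_K ≤ M and every t ∈ (0, t₀): G_{K_t}(x) ∖ T(ct) = L(K_t, x) ∖ T(ct), where T(r) = {y ∈ ℝⁿ : dist(y, S^{n−1} ∩ (S^{n−1}+x)) ≤ r}. -/

import Mathlib

open MeasureTheory Metric Set Pointwise
open scoped RealInnerProductSpace
set_option maxHeartbeats 2000000

/-- The radial set associated with a function `ρ` on the unit sphere:
`{0} ∪ {x ≠ 0 : ‖x‖ ≤ ρ(x/‖x‖)}`. -/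
def radialSet {n : ℕ} (ρ : EuclideanSpace ℝ (Fin n) → ℝ) :
    Set (EuclideanSpace ℝ (Fin n)) :=
  {0} ∪ {x | x ≠ 0 ∧ ‖x‖ ≤ ρ (‖x‖⁻¹ • x)}

/-- `[f,g]_A = {τ·y : y ∈ A, τ ∈ [f(y), g(y)]}`. -/
def radialSegments {n : ℕ} (A : Set (EuclideanSpace ℝ (Fin n)))
    (f g : EuclideanSpace ℝ (Fin n) → ℝ) : Set (EuclideanSpace ℝ (Fin n)) :=
  {p | ∃ y ∈ A, ∃ τ : ℝ, f y ≤ τ ∧ τ ≤ g y ∧ p = τ • y}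

lemma mem_add_singleton' {G : Type*} [AddGroup G] {A : Set G} {x y : G} :
    y ∈ A + {x} ↔ y - x ∈ A := by
  rw [Set.add_singleton]
  constructor
  · rintro ⟨a, ha, rfl⟩; simpa using ha
  · intro h; exact ⟨y - x, h, by simp⟩

lemma key {E : Type*} [NormedAddCommGroup E] [InnerProductSpace ℝ E]
    (x : E) (hr0 : 0 < ‖x‖) (hr2 : ‖x‖ < 2) :
    ∃ c₁ > (0:ℝ), ∃ δ₀ > (0:ℝ), ∀ δ : ℝ, 0 < δ → δ ≤ δ₀ → ∀ u : E,
      ‖u‖ = 1 → |‖u - x‖ - 1| ≤ δ →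
      ∃ v, ‖v‖ = 1 ∧ ‖v - x‖ = 1 ∧ dist u v ≤ c₁ * δ := by
  set r := ‖x‖ with hrdef
  have hb2 : 0 < 1 - r^2/4 := by nlinarith
  set b := Real.sqrt (1 - r^2/4) with hbdef
  have hb : 0 < b := Real.sqrt_pos.2 hb2
  have hbsq : b^2 = 1 - r^2/4 := Real.sq_sqrt hb2.le
  refine ⟨2/r + 4/(r*b), by positivity, r*(2-r)/8,
    div_pos (mul_pos hr0 (by linarith)) (by norm_num), ?_⟩
  intro δ hδ hδ0 u hu hud
  set a := ⟪u, x⟫ with hadef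
  have ha_le : |a| ≤ r := by
    calc |a| ≤ ‖u‖ * ‖x‖ := abs_real_inner_le_norm u x
    _ = r := by rw [hu, one_mul]
  have ha1 : -r ≤ a := (abs_le.1 ha_le).1
  have ha2 : a ≤ r := (abs_le.1 ha_le).2
  have hd1 : -δ ≤ ‖u - x‖ - 1 := (abs_le.1 hud).1
  have hd2 : ‖u - x‖ - 1 ≤ δ := (abs_le.1 hud).2
  have hδhalf : δ ≤ 1/2 := by nlinarith
  have h1 : ‖u - x‖^2 = 1 - 2*a + r^2 := by
    rw [norm_sub_sq_real, hu]; ring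
  have hdnn : (0:ℝ) ≤ ‖u - x‖ := norm_nonneg _
  have h2 : |a - r^2/2| ≤ 2*δ := by
    rw [abs_le]; constructor <;> nlinarith
  have h2a : -(2*δ) ≤ a - r^2/2 := (abs_le.1 h2).1
  have h2b : a - r^2/2 ≤ 2*δ := (abs_le.1 h2).2
  have haup : a < r := by nlinarith
  have halo : -r < a := by nlinarith
  have hr0' : r ≠ 0 := hr0.ne'
  set w := u - (a/r^2) • x with hwdef
  have hxw : ⟪x, w⟫ = 0 := by
    have hcomm : ⟪x, u⟫ = a := by rw [hadef]; exact (real_inner_comm x u).symm ▸ rfl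
    rw [hwdef, inner_sub_right, real_inner_smul_right, real_inner_self_eq_norm_sq,
      hcomm, ← hrdef]
    field_simp
    ring
  have hw2 : ‖w‖^2 = 1 - a^2/r^2 := by
    rw [hwdef, norm_sub_sq_real, real_inner_smul_right, norm_smul, ← hadef, hu]
    rw [Real.norm_eq_abs, ← hrdef, mul_pow, sq_abs]
    field_simp
    ring
  have hwne : w ≠ 0 := by
    intro h
    have h0 : ‖w‖^2 = 0 := by rw [h]; simp
    rw [hw2] at h0
    have h3 : a^2 = r^2 := by field_simp at h0; linarith
    nlinarith
  have hwpos : 0 < ‖w‖ := norm_pos_iff.2 hwne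
  set W := ‖w‖ with hWdef
  set v : E := (1/2 : ℝ) • x + (b/W) • w with hvdef
  have hxw' : ∀ s s' : ℝ, ⟪s • x, s' • w⟫ = 0 := by
    intro s s'
    rw [real_inner_smul_left, real_inner_smul_right, hxw]; ring
  have hnx : ‖(1/2 : ℝ) • x‖^2 = r^2/4 := by
    rw [norm_smul, Real.norm_eq_abs, ← hrdef, mul_pow, sq_abs]; ring
  have hnw : ‖(b/W) • w‖^2 = b^2 := by
    rw [norm_smul, Real.norm_eq_abs, ← hWdef, mul_pow, sq_abs, div_pow]
    field_simp
  have hv1 : ‖v‖ = 1 := by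
    have h : ‖v‖^2 = 1 := by
      rw [hvdef, norm_add_sq_real, hxw' (1/2) (b/W), hnx, hnw, hbsq]; ring
    nlinarith [norm_nonneg v]
  have hvx : v - x = (-(1/2) : ℝ) • x + (b/W) • w := by
    rw [hvdef]; module
  have hv2 : ‖v - x‖ = 1 := by
    have hnx' : ‖(-(1/2) : ℝ) • x‖^2 = r^2/4 := by
      rw [norm_smul, Real.norm_eq_abs, ← hrdef, mul_pow, sq_abs]; ring
    have h : ‖v - x‖^2 = 1 := by
      rw [hvx, norm_add_sq_real, hxw' (-(1/2)) (b/W), hnx', hnw, hbsq]; ring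
    nlinarith [norm_nonneg (v - x)]
  refine ⟨v, hv1, hv2, ?_⟩
  have huv : u - v = (a/r^2 - 1/2) • x + (1 - b/W) • w := by
    rw [hvdef, hwdef]; module
  have hA : ‖(a/r^2 - 1/2 : ℝ) • x‖ ≤ 2*δ/r := by
    rw [norm_smul, Real.norm_eq_abs, ← hrdef]
    rw [show a/r^2 - 1/2 = (a - r^2/2)/r^2 by
      rw [eq_div_iff (pow_ne_zero 2 hr0'), sub_mul, div_mul_cancel₀ _ (pow_ne_zero 2 hr0')]; ring]
    rw [abs_div, abs_of_nonneg (by positivity : (0:ℝ) ≤ r^2)]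
    rw [div_mul_eq_mul_div, div_le_div_iff₀ (by positivity) hr0]
    nlinarith [abs_nonneg (a - r^2/2), sq_nonneg r]
  have hWb : |W - b| ≤ 4*δ/(r*b) := by
    have hwr : W^2 * r^2 = r^2 - a^2 := by
      rw [hw2]; field_simp
    have hprod : |W^2 - b^2| * r^2 ≤ 4*δ*r := by
      have heq : (W^2 - b^2) * r^2 = (r^2/2 - a)*(r^2/2 + a) := by
        linear_combination hwr - r^2 * hbsq
      have habs1 : |r^2/2 - a| ≤ 2*δ := by rwa [abs_sub_comm] at h2
      have habs2 : |r^2/2 + a| ≤ 2*r := by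
        rw [abs_le]; constructor <;> nlinarith
      calc |W^2 - b^2| * r^2 = |(W^2 - b^2) * r^2| := by
            rw [abs_mul, abs_of_nonneg (sq_nonneg r)]
        _ = |(r^2/2 - a)*(r^2/2 + a)| := by rw [heq]
        _ = |r^2/2 - a| * |r^2/2 + a| := abs_mul _ _
        _ ≤ (2*δ) * (2*r) := mul_le_mul habs1 habs2 (abs_nonneg _) (by positivity)
        _ = 4*δ*r := by ring
    have hWb' : |W - b| * b ≤ |W^2 - b^2| := by
      have heq2 : W^2 - b^2 = (W - b)*(W + b) := by ring
      rw [heq2, abs_mul, abs_of_nonneg (by positivity : (0:ℝ) ≤ W + b)]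
      exact mul_le_mul_of_nonneg_left (by nlinarith : b ≤ W + b) (abs_nonneg _)
    rw [le_div_iff₀ (by positivity)]
    nlinarith [abs_nonneg (W - b), abs_nonneg (W^2 - b^2)]
  have hB : ‖(1 - b/W : ℝ) • w‖ ≤ 4*δ/(r*b) := by
    rw [norm_smul, Real.norm_eq_abs, ← hWdef]
    rw [show (1 - b/W : ℝ) = (W - b)/W by field_simp]
    rw [abs_div, abs_of_pos hwpos, div_mul_cancel₀ _ hwpos.ne']
    exact hWb
  rw [dist_eq_norm, huv]
  calc ‖(a/r^2 - 1/2 : ℝ) • x + (1 - b/W : ℝ) • w‖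
      ≤ ‖(a/r^2 - 1/2 : ℝ) • x‖ + ‖(1 - b/W : ℝ) • w‖ := norm_add_le _ _
    _ ≤ 2*δ/r + 4*δ/(r*b) := add_le_add hA hB
    _ = (2/r + 4/(r*b)) * δ := by field_simp

section RadialHelpers

variable {n : ℕ}

lemma norm_inv_smul_self {y : EuclideanSpace ℝ (Fin n)} (hy : y ≠ 0) :
    ‖(‖y‖⁻¹ • y : EuclideanSpace ℝ (Fin n))‖ = 1 := by
  rw [norm_smul, norm_inv, norm_norm, inv_mul_cancel₀ (norm_ne_zero_iff.2 hy)]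

lemma smul_norm_inv {y : EuclideanSpace ℝ (Fin n)} (hy : y ≠ 0) :
    ‖y‖ • (‖y‖⁻¹ • y) = y := by
  rw [smul_smul, mul_inv_cancel₀ (norm_ne_zero_iff.2 hy), one_smul]

lemma mem_radialSet_of_norm_le {g : EuclideanSpace ℝ (Fin n) → ℝ}
    (hg : ∀ v ∈ sphere (0 : EuclideanSpace ℝ (Fin n)) 1, 1 ≤ g v)
    {y : EuclideanSpace ℝ (Fin n)} (hy : ‖y‖ ≤ 1) : y ∈ radialSet g := by
  rcases eq_or_ne y 0 with rfl | h0
  · exact Or.inl rfl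
  · exact Or.inr ⟨h0, hy.trans (hg _ (mem_sphere_zero_iff_norm.2 (norm_inv_smul_self h0)))⟩

lemma smul_mem_radialSet {g : EuclideanSpace ℝ (Fin n) → ℝ}
    {u : EuclideanSpace ℝ (Fin n)} {τ : ℝ} (hu : ‖u‖ = 1) (h1 : 1 ≤ τ) (h2 : τ ≤ g u) :
    τ • u ∈ radialSet g := by
  have hτ : (0:ℝ) < τ := lt_of_lt_of_le one_pos h1
  have hnrm : ‖τ • u‖ = τ := by
    rw [norm_smul, hu, mul_one, Real.norm_eq_abs, abs_of_pos hτ]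
  refine Or.inr ⟨?_, ?_⟩
  · intro h; rw [h, norm_zero] at hnrm; linarith
  · rw [hnrm, smul_smul, inv_mul_cancel₀ hτ.ne', one_smul]
    exact h2

lemma norm_le_of_mem_radialSet {g : EuclideanSpace ℝ (Fin n) → ℝ} {C : ℝ}
    (hgM : ∀ v ∈ sphere (0 : EuclideanSpace ℝ (Fin n)) 1, g v ≤ C) (hC : 0 ≤ C)
    {y : EuclideanSpace ℝ (Fin n)} (hy : y ∈ radialSet g) : ‖y‖ ≤ C := by
  rcases hy with h | ⟨h0, hle⟩
  · rw [Set.mem_singleton_iff] at h; rw [h, norm_zero]; exact hC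
  · exact hle.trans (hgM _ (mem_sphere_zero_iff_norm.2 (norm_inv_smul_self h0)))

lemma radial_bound {g : EuclideanSpace ℝ (Fin n) → ℝ}
    {y : EuclideanSpace ℝ (Fin n)} (hy : y ∈ radialSet g) (h1 : 1 < ‖y‖) :
    ‖y‖ ≤ g (‖y‖⁻¹ • y) := by
  rcases hy with h | ⟨_, hle⟩
  · rw [Set.mem_singleton_iff] at h; rw [h, norm_zero] at h1; linarith
  · exact hle

end RadialHelpers

/-- For every `M > 0` and `x ∈ ℝⁿ` with `0 < |x| < 2` there
exist `c, t₀ > 0` depending only on `M` and `|x|` such that for every radial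
set `K` with `ρ_K ≤ M` and every `t ∈ (0,t₀)`:
`G_{K_t}(x) ∖ T(ct) = L(K_t,x) ∖ T(ct)`, where `K_t` has radial function
`1 + t·ρ_K`, `G_L(x) = L ∩ (L+x)`,
`L(K_t,x) = (𝔹 ∩ (𝔹+x)) ⊔ [1,ρ_{K_t}]_{C(x)} ⊔ ([1,ρ_{K_t}]_{C(−x)} + x)`,
`C(x) = S^{n−1} ∩ (𝔹+x)`, and `T(r)` is the `r`-neighborhood of
`S^{n−1} ∩ (S^{n−1}+x)`. -/
theorem stmt4 (n : ℕ) (hn : 1 ≤ n) (M : ℝ) (hM : 0 < M)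
    (x : EuclideanSpace ℝ (Fin n)) (hx0 : 0 < ‖x‖) (hx2 : ‖x‖ < 2) :
    ∃ c > (0 : ℝ), ∃ t₀ > (0 : ℝ),
      ∀ ρ : EuclideanSpace ℝ (Fin n) → ℝ,
        ContinuousOn ρ (sphere (0 : EuclideanSpace ℝ (Fin n)) 1) →
        (∀ v ∈ sphere (0 : EuclideanSpace ℝ (Fin n)) 1, 0 ≤ ρ v ∧ ρ v ≤ M) →
        ∀ t ∈ Set.Ioo (0 : ℝ) t₀,
          (radialSet (fun v => 1 + t * ρ v) ∩ (radialSet (fun v => 1 + t * ρ v) + {x})) \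
              {y : EuclideanSpace ℝ (Fin n) |
                infDist y (sphere (0 : EuclideanSpace ℝ (Fin n)) 1 ∩
                  (sphere (0 : EuclideanSpace ℝ (Fin n)) 1 + {x})) ≤ c * t}
            = ((closedBall (0 : EuclideanSpace ℝ (Fin n)) 1 ∩ closedBall x 1)
                ∪ radialSegments (sphere (0 : EuclideanSpace ℝ (Fin n)) 1 ∩ closedBall x 1)
                    (fun _ => 1) (fun v => 1 + t * ρ v)
                ∪ (radialSegments (sphere (0 : EuclideanSpace ℝ (Fin n)) 1 ∩ closedBall (-x) 1)
                    (fun _ => 1) (fun v => 1 + t * ρ v) + {x})) \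
              {y : EuclideanSpace ℝ (Fin n) |
                infDist y (sphere (0 : EuclideanSpace ℝ (Fin n)) 1 ∩
                  (sphere (0 : EuclideanSpace ℝ (Fin n)) 1 + {x})) ≤ c * t} := by
  obtain ⟨c₁, hc₁, δ₁, hδ₁, hk₁⟩ := key x hx0 hx2
  obtain ⟨c₂, hc₂, δ₂, hδ₂, hk₂⟩ := key (-x) (by simpa using hx0) (by simpa using hx2)
  refine ⟨(2*(c₁+c₂)+1)*M, mul_pos (by linarith) hM,
    min δ₁ δ₂ / (2*M), div_pos (lt_min hδ₁ hδ₂) (by linarith), ?_⟩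
  intro ρ hρc hρ t ht
  obtain ⟨ht0, htlt⟩ := ht
  have h2M : (0:ℝ) < 2*M := by linarith
  have htM : 2*t*M ≤ min δ₁ δ₂ := by
    rw [lt_div_iff₀ h2M] at htlt; nlinarith
  have htM1 : 2*t*M ≤ δ₁ := htM.trans (min_le_left _ _)
  have htM2 : 2*t*M ≤ δ₂ := htM.trans (min_le_right _ _)
  have htMpos : (0:ℝ) < 2*t*M := by positivity
  have htMnn : (0:ℝ) ≤ t*M := by positivity
  set g := fun v : EuclideanSpace ℝ (Fin n) => 1 + t * ρ v with hgdef
  have hg1 : ∀ v ∈ sphere (0 : EuclideanSpace ℝ (Fin n)) 1, 1 ≤ g v := by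
    intro v hv
    have h := (hρ v hv).1
    simp only [hgdef]
    nlinarith [mul_nonneg ht0.le h]
  have hgM : ∀ v ∈ sphere (0 : EuclideanSpace ℝ (Fin n)) 1, g v ≤ 1 + t*M := by
    intro v hv
    have h := (hρ v hv).2
    simp only [hgdef]
    nlinarith [mul_le_mul_of_nonneg_left h ht0.le]
  ext y
  simp only [Set.mem_diff, Set.mem_setOf_eq]
  have hmem : ∀ v : EuclideanSpace ℝ (Fin n), ‖v‖ = 1 → ‖v - x‖ = 1 →
      infDist y (sphere (0 : EuclideanSpace ℝ (Fin n)) 1 ∩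
        (sphere (0 : EuclideanSpace ℝ (Fin n)) 1 + {x})) ≤ dist y v := by
    intro v h1 h2
    exact Metric.infDist_le_dist_of_mem
      ⟨mem_sphere_zero_iff_norm.2 h1, mem_add_singleton'.2 (by
        rw [mem_sphere_zero_iff_norm]; exact h2)⟩
  constructor
  · rintro ⟨hyG, hyT⟩
    refine ⟨?_, hyT⟩
    obtain ⟨hy1, hy2'⟩ := hyG
    have hy2 : y - x ∈ radialSet g := mem_add_singleton'.1 hy2'
    by_cases h1 : ‖y‖ ≤ 1
    · by_cases h2 : ‖y - x‖ ≤ 1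
      · exact Or.inl (Or.inl ⟨mem_closedBall_zero_iff.2 h1, mem_closedBall_iff_norm.2 h2⟩)
      · push_neg at h2
        have hz0 : y - x ≠ 0 := by
          intro h; rw [h, norm_zero] at h2; linarith
        set u := ‖y - x‖⁻¹ • (y - x) with hudef
        have hu : ‖u‖ = 1 := norm_inv_smul_self hz0
        have huS : u ∈ sphere (0 : EuclideanSpace ℝ (Fin n)) 1 := mem_sphere_zero_iff_norm.2 hu
        have hzg : ‖y - x‖ ≤ g u := radial_bound hy2 h2
        have hzM : ‖y - x‖ ≤ 1 + t*M := hzg.trans (hgM u huS)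
        have hzu : y - x = ‖y - x‖ • u := (smul_norm_inv hz0).symm
        have hzu' : ‖(y - x) - u‖ = ‖y - x‖ - 1 := by
          have e : (y - x) - u = (‖y - x‖ - 1) • u := by
            rw [sub_smul, one_smul, ← hzu]
          rw [e, norm_smul, hu, mul_one, Real.norm_eq_abs, abs_of_nonneg (by linarith)]
        have hux : ‖u - (-x)‖ ≤ 1 := by
          by_contra hc'
          push_neg at hc'
          have hub : ‖u - (-x)‖ ≤ 1 + t*M := by
            have e : u - (-x) = (u - (y - x)) + y := by abel
            have h6 : ‖u - (y - x)‖ = ‖y - x‖ - 1 := by rw [norm_sub_rev]; exact hzu'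
            calc ‖u - (-x)‖ = ‖(u - (y - x)) + y‖ := by rw [e]
              _ ≤ ‖u - (y - x)‖ + ‖y‖ := norm_add_le _ _
              _ ≤ 1 + t*M := by rw [h6]; linarith
          obtain ⟨v, hv1, hv2, hv3⟩ := hk₂ (2*t*M) htMpos htM2 u hu (by
            rw [abs_le]; constructor <;> [linarith; linarith])
          refine absurd ((hmem (v + x) ?_ ?_).trans ?_) hyT
          · rw [← sub_neg_eq_add]; exact hv2
          · rw [add_sub_cancel_right]; exact hv1
          · calc dist y (v + x) = ‖y - (v + x)‖ := dist_eq_norm _ _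
              _ = ‖((y - x) - u) + (u - v)‖ := by congr 1; abel
              _ ≤ ‖(y - x) - u‖ + ‖u - v‖ := norm_add_le _ _
              _ ≤ t*M + c₂*(2*t*M) := add_le_add (by rw [hzu']; linarith)
                  (by rw [← dist_eq_norm]; exact hv3)
              _ ≤ (2*(c₁+c₂)+1)*M*t := by nlinarith [mul_nonneg hc₁.le htMnn]
        exact Or.inr (mem_add_singleton'.2
          ⟨u, ⟨huS, mem_closedBall_iff_norm.2 hux⟩, ‖y - x‖, h2.le, hzg, hzu⟩)
    · push_neg at h1
      have hy0 : y ≠ 0 := by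
        intro h; rw [h, norm_zero] at h1; linarith
      set u := ‖y‖⁻¹ • y with hudef
      have hu : ‖u‖ = 1 := norm_inv_smul_self hy0
      have huS : u ∈ sphere (0 : EuclideanSpace ℝ (Fin n)) 1 := mem_sphere_zero_iff_norm.2 hu
      have hyg : ‖y‖ ≤ g u := radial_bound hy1 h1
      have hyM : ‖y‖ ≤ 1 + t*M := hyg.trans (hgM u huS)
      have hyu : y = ‖y‖ • u := (smul_norm_inv hy0).symm
      have hyu' : ‖y - u‖ = ‖y‖ - 1 := by
        have e : y - u = (‖y‖ - 1) • u := by rw [sub_smul, one_smul, ← hyu]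
        rw [e, norm_smul, hu, mul_one, Real.norm_eq_abs, abs_of_nonneg (by linarith)]
      have hyxM : ‖y - x‖ ≤ 1 + t*M := norm_le_of_mem_radialSet hgM (by linarith) hy2
      have hux : ‖u - x‖ ≤ 1 := by
        by_contra hc'
        push_neg at hc'
        have hub : ‖u - x‖ ≤ 1 + 2*t*M := by
          have h5 : ‖u - y‖ = ‖y‖ - 1 := by rw [norm_sub_rev]; exact hyu'
          calc ‖u - x‖ = ‖(u - y) + (y - x)‖ := by congr 1; abel
            _ ≤ ‖u - y‖ + ‖y - x‖ := norm_add_le _ _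
            _ ≤ 1 + 2*t*M := by rw [h5]; linarith
        obtain ⟨v, hv1, hv2, hv3⟩ := hk₁ (2*t*M) htMpos htM1 u hu (by
          rw [abs_le]; constructor <;> [linarith; linarith])
        refine absurd ((hmem v hv1 hv2).trans ?_) hyT
        calc dist y v = ‖y - v‖ := dist_eq_norm _ _
          _ = ‖(y - u) + (u - v)‖ := by congr 1; abel
          _ ≤ ‖y - u‖ + ‖u - v‖ := norm_add_le _ _
          _ ≤ t*M + c₁*(2*t*M) := add_le_add (by rw [hyu']; linarith)
              (by rw [← dist_eq_norm]; exact hv3)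
          _ ≤ (2*(c₁+c₂)+1)*M*t := by nlinarith [mul_nonneg hc₂.le htMnn]
      exact Or.inl (Or.inr ⟨u, ⟨huS, mem_closedBall_iff_norm.2 hux⟩, ‖y‖, h1.le, hyg, hyu⟩)
  · rintro ⟨hyL, hyT⟩
    refine ⟨?_, hyT⟩
    rcases hyL with (hB | hSeg) | hSeg'
    · obtain ⟨hb1, hb2⟩ := hB
      exact ⟨mem_radialSet_of_norm_le hg1 (mem_closedBall_zero_iff.1 hb1),
        mem_add_singleton'.2 (mem_radialSet_of_norm_le hg1 (mem_closedBall_iff_norm.1 hb2))⟩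
    · obtain ⟨u, ⟨huS, huB⟩, τ, hτ1, hτ2, rfl⟩ := hSeg
      have hu : ‖u‖ = 1 := mem_sphere_zero_iff_norm.1 huS
      have hτ1' : (1:ℝ) ≤ τ := hτ1
      have huxle : ‖u - x‖ ≤ 1 := mem_closedBall_iff_norm.1 huB
      have hgu : g u ≤ 1 + t*M := hgM u huS
      have hτu : ‖τ • u - u‖ = τ - 1 := by
        have e : τ • u - u = (τ - 1) • u := by rw [sub_smul, one_smul]
        rw [e, norm_smul, hu, mul_one, Real.norm_eq_abs, abs_of_nonneg (by linarith)]
      have h2 : ‖τ • u - x‖ ≤ 1 := by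
        by_contra hc'
        push_neg at hc'
        have h6 : ‖τ • u - x‖ ≤ ‖τ • u - u‖ + ‖u - x‖ := by
          have e : τ • u - x = (τ • u - u) + (u - x) := by abel
          rw [e]; exact norm_add_le _ _
        have hul : 1 - t*M ≤ ‖u - x‖ := by rw [hτu] at h6; linarith
        obtain ⟨v, hv1, hv2, hv3⟩ := hk₁ (2*t*M) htMpos htM1 u hu (by
          rw [abs_le]; constructor <;> [linarith; linarith])
        refine absurd ((hmem v hv1 hv2).trans ?_) hyT
        calc dist (τ • u) v = ‖τ • u - v‖ := dist_eq_norm _ _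
          _ = ‖(τ • u - u) + (u - v)‖ := by congr 1; abel
          _ ≤ ‖τ • u - u‖ + ‖u - v‖ := norm_add_le _ _
          _ ≤ t*M + c₁*(2*t*M) := add_le_add (by rw [hτu]; linarith)
              (by rw [← dist_eq_norm]; exact hv3)
          _ ≤ (2*(c₁+c₂)+1)*M*t := by nlinarith [mul_nonneg hc₂.le htMnn]
      exact ⟨smul_mem_radialSet hu hτ1' hτ2,
        mem_add_singleton'.2 (mem_radialSet_of_norm_le hg1 h2)⟩
    · have hz := mem_add_singleton'.1 hSeg'
      obtain ⟨u, ⟨huS, huB⟩, τ, hτ1, hτ2, hzeq⟩ := hz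
      have hu : ‖u‖ = 1 := mem_sphere_zero_iff_norm.1 huS
      have hτ1' : (1:ℝ) ≤ τ := hτ1
      have huxle : ‖u - (-x)‖ ≤ 1 := mem_closedBall_iff_norm.1 huB
      have hgu : g u ≤ 1 + t*M := hgM u huS
      have hy2 : y - x ∈ radialSet g := by
        rw [hzeq]; exact smul_mem_radialSet hu hτ1' hτ2
      have hτu : ‖τ • u - u‖ = τ - 1 := by
        have e : τ • u - u = (τ - 1) • u := by rw [sub_smul, one_smul]
        rw [e, norm_smul, hu, mul_one, Real.norm_eq_abs, abs_of_nonneg (by linarith)]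
      have hyeq : y = τ • u + x := eq_add_of_sub_eq hzeq
      have h1 : ‖y‖ ≤ 1 := by
        by_contra hc'
        push_neg at hc'
        have h6 : ‖y‖ ≤ ‖τ • u - u‖ + ‖u - (-x)‖ := by
          have e : y = (τ • u - u) + (u - (-x)) := by rw [hyeq]; abel
          rw [e]; exact norm_add_le _ _
        have hul : 1 - t*M ≤ ‖u - (-x)‖ := by rw [hτu] at h6; linarith
        obtain ⟨v, hv1, hv2, hv3⟩ := hk₂ (2*t*M) htMpos htM2 u hu (by
          rw [abs_le]; constructor <;> [linarith; linarith])
        refine absurd ((hmem (v + x) ?_ ?_).trans ?_) hyT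
        · rw [← sub_neg_eq_add]; exact hv2
        · rw [add_sub_cancel_right]; exact hv1
        · calc dist y (v + x) = ‖y - (v + x)‖ := dist_eq_norm _ _
            _ = ‖(τ • u - u) + (u - v)‖ := by rw [hyeq]; congr 1; abel
            _ ≤ ‖τ • u - u‖ + ‖u - v‖ := norm_add_le _ _
            _ ≤ t*M + c₂*(2*t*M) := add_le_add (by rw [hτu]; linarith)
                (by rw [← dist_eq_norm]; exact hv3)
            _ ≤ (2*(c₁+c₂)+1)*M*t := by nlinarith [mul_nonneg hc₁.le htMnn]
      exact ⟨mem_radialSet_of_norm_le hg1 h1, mem_add_singleton'.2 hy2⟩
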